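/- Let {x^k} be generated by Algorithm 1. If the sequence {x^k} has at least one accumulation point, then lim_{k→∞} min_{0 ≤ l ≤ k} G(x^l) = 0. -/

import Mathlib

open scoped RealInnerProductSpace

/-- The Frank–Wolfe gap `G(x) = sup_{v ∈ s} (⟪∇f(x), x − v⟫ + g(x) − g(v))`. -/
noncomputable def FWgap {E : Type*} [NormedAddCommGroup E] [InnerProductSpace ℝ E] [CompleteSpace E]
    (f g : E → ℝ) (s : Set E) (x : E) : ℝ :=
  ⨆ v : s, (⟪gradient f x, x - (v : E)⟫ + g x - g (v : E))


/-- **Corollary.** If the sequence `{x^k}` generated by Algorithm 1 has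
at least one accumulation point, then `lim_{k→∞} min_{0 ≤ l ≤ k} G(x^l) = 0`. -/
theorem alg1_min_FWgap_tendsto_zero
    {E : Type*} [NormedAddCommGroup E] [InnerProductSpace ℝ E] [FiniteDimensional ℝ E]
    (s : Set E) (hs_ne : s.Nonempty) (hs_cl : IsClosed s) (hs_cv : Convex ℝ s)
    (g : E → ℝ) (hg_cv : ConvexOn ℝ s g) (hg_lsc : LowerSemicontinuousOn g s)
    (hg_sc : ∀ M : ℝ, ∃ R : ℝ, ∀ z ∈ s, R ≤ ‖z‖ → M ≤ g z / ‖z‖)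
    (f : E → ℝ) (hf : ∃ u : Set E, IsOpen u ∧ s ⊆ u ∧ ContDiffOn ℝ 1 f u)
    (hF_bdd : BddBelow ((fun z => f z + g z) '' s))
    (β σ p : ℝ) (hβ : β ∈ Set.Ioo (0 : ℝ) 1) (hσ : σ ∈ Set.Ioo (0 : ℝ) 1)
    (hp : p ∈ Set.Ioc (0 : ℝ) 1)
    (x v d : ℕ → E) (ik : ℕ → ℕ) (Fs ps : ℕ → ℝ)
    (hx0 : x 0 ∈ s)
    (hv : ∀ k, v k ∈ s ∧ ∀ w ∈ s,
      ⟪gradient f (x k), v k⟫ + g (v k) ≤ ⟪gradient f (x k), w⟫ + g w)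
    (hd : ∀ k, d k = v k - x k)
    (hik : ∀ k,
      (f (x k + β ^ ik k • d k) + g (x k + β ^ ik k • d k)
          ≤ Fs k - σ * β ^ ik k * FWgap f g s (x k))
      ∧ ∀ j < ik k,
        ¬ (f (x k + β ^ j • d k) + g (x k + β ^ j • d k)
          ≤ Fs k - σ * β ^ j * FWgap f g s (x k)))
    (hxsucc : ∀ k, x (k + 1) = x k + β ^ ik k • d k)
    (hF0 : Fs 0 = f (x 0) + g (x 0))
    (hps : ∀ k, ps (k + 1) ∈ Set.Icc p 1)
    (hFsucc : ∀ k, Fs (k + 1)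
      = ps (k + 1) * (f (x (k + 1)) + g (x (k + 1))) + (1 - ps (k + 1)) * Fs k)
    (hacc : ∃ xstar : E, ∃ φ : ℕ → ℕ, StrictMono φ ∧
      Filter.Tendsto (fun k => x (φ k)) Filter.atTop (nhds xstar)) :
    Filter.Tendsto
      (fun k => (Finset.range (k + 1)).inf' ⟨0, Finset.mem_range.mpr (Nat.succ_pos k)⟩
        (fun l => FWgap f g s (x l)))
      Filter.atTop (nhds 0) := by
  obtain ⟨hβ0, hβ1⟩ := hβ
  obtain ⟨hσ0, hσ1⟩ := hσ
  obtain ⟨hp0, hp1⟩ := hp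
  obtain ⟨u, hu_open, hsu, hf_cd⟩ := hf
  obtain ⟨m, hm⟩ := hF_bdd
  have hm' : ∀ z ∈ s, m ≤ f z + g z := fun z hz => hm ⟨z, hz, rfl⟩
  have hNe : Nonempty s := hs_ne.to_subtype
  -- iterates stay in s
  have hxs : ∀ k, x k ∈ s := by
    intro k
    induction k with
    | zero => exact hx0
    | succ n ih =>
      rw [hxsucc n, hd n]
      exact hs_cv.add_smul_sub_mem ih (hv n).1
        ⟨pow_nonneg hβ0.le _, pow_le_one₀ hβ0.le hβ1.le⟩
  -- gradient applied
  have hgradapp : ∀ z y : E, ⟪gradient f z, y⟫ = fderiv ℝ f z y := by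
    intro z y; exact InnerProductSpace.toDual_symm_apply
  -- gap formula
  have hgap : ∀ k, FWgap f g s (x k)
      = ⟪gradient f (x k), x k - v k⟫ + g (x k) - g (v k) := by
    intro k
    have key : ∀ w : s, ⟪gradient f (x k), x k - (w : E)⟫ + g (x k) - g (w : E)
        ≤ ⟪gradient f (x k), x k - v k⟫ + g (x k) - g (v k) := by
      intro w
      have h := (hv k).2 w w.2
      simp only [inner_sub_right] at *
      linarith
    refine le_antisymm (ciSup_le key) ?_
    have hb : BddAbove (Set.range fun w : s =>
        ⟪gradient f (x k), x k - (w : E)⟫ + g (x k) - g (w : E)) := by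
      refine ⟨⟪gradient f (x k), x k - v k⟫ + g (x k) - g (v k), ?_⟩
      rintro y ⟨w, rfl⟩
      exact key w
    exact le_ciSup hb (⟨v k, (hv k).1⟩ : s)
  have hGnn : ∀ k, 0 ≤ FWgap f g s (x k) := by
    intro k
    rw [hgap k]
    have h := (hv k).2 (x k) (hxs k)
    simp only [inner_sub_right]
    linarith
  -- F(x^k) ≤ Fs k
  have hFx_le_Fs : ∀ k, f (x k) + g (x k) ≤ Fs k := by
    intro k
    induction k with
    | zero => rw [hF0]
    | succ n ih =>
      have h1 := (hik n).1
      rw [← hxsucc n] at h1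
      have hσtG : 0 ≤ σ * β ^ ik n * FWgap f g s (x n) :=
        mul_nonneg (mul_nonneg hσ0.le (pow_nonneg hβ0.le _)) (hGnn n)
      have hps' := hps n
      rw [hFsucc n]
      nlinarith [hps'.1, hps'.2]
  -- descent
  have hdesc : ∀ k, Fs (k + 1) ≤ Fs k - p * σ * (β ^ ik k * FWgap f g s (x k)) := by
    intro k
    have h1 := (hik k).1
    rw [← hxsucc k] at h1
    have hσtG : 0 ≤ σ * (β ^ ik k * FWgap f g s (x k)) :=
      mul_nonneg hσ0.le (mul_nonneg (pow_nonneg hβ0.le _) (hGnn k))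
    have hps' := hps k
    have hF := hFx_le_Fs k
    rw [hFsucc k]
    nlinarith [hps'.1, hps'.2]
  have hanti : Antitone Fs := by
    refine antitone_nat_of_succ_le fun k => ?_
    have h := hdesc k
    have : 0 ≤ p * σ * (β ^ ik k * FWgap f g s (x k)) :=
      mul_nonneg (mul_nonneg hp0.le hσ0.le)
        (mul_nonneg (pow_nonneg hβ0.le _) (hGnn k))
    linarith
  have hbdd : ∀ k, m ≤ Fs k := fun k => le_trans (hm' _ (hxs k)) (hFx_le_Fs k)
  have hconv : Filter.Tendsto Fs Filter.atTop (nhds (⨅ k, Fs k)) :=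
    tendsto_atTop_ciInf hanti ⟨m, by rintro y ⟨k, rfl⟩; exact hbdd k⟩
  have hdiff0 : Filter.Tendsto (fun k => Fs k - Fs (k + 1)) Filter.atTop (nhds 0) := by
    have h2 : Filter.Tendsto (fun k => Fs (k + 1)) Filter.atTop (nhds (⨅ k, Fs k)) :=
      hconv.comp (Filter.tendsto_add_atTop_nat 1)
    simpa using hconv.sub h2
  have htG0 : Filter.Tendsto (fun k => β ^ ik k * FWgap f g s (x k))
      Filter.atTop (nhds 0) := by
    have hpσ : 0 < p * σ := mul_pos hp0 hσ0
    refine squeeze_zero (fun k => mul_nonneg (pow_nonneg hβ0.le _) (hGnn k))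
      (g := fun k => (p * σ)⁻¹ * (Fs k - Fs (k + 1))) (fun k => ?_) ?_
    · have h := hdesc k
      rw [le_inv_mul_iff₀ hpσ]
      linarith
    · simpa using hdiff0.const_mul (p * σ)⁻¹
  -- reduce to existence of small gap
  have hmain : ∀ ε > 0, ∃ k, FWgap f g s (x k) < ε := by
    intro ε hε
    by_contra hcon
    push_neg at hcon
    -- β ^ ik k → 0
    have ht0 : Filter.Tendsto (fun k => (β : ℝ) ^ ik k) Filter.atTop (nhds 0) := by
      refine squeeze_zero (fun k => pow_nonneg hβ0.le _)
        (g := fun k => ε⁻¹ * (β ^ ik k * FWgap f g s (x k))) (fun k => ?_) ?_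
      · rw [le_inv_mul_iff₀ hε]
        have := hcon k
        nlinarith [pow_nonneg hβ0.le (ik k)]
      · simpa using htG0.const_mul ε⁻¹
    have hik1 : ∀ᶠ k in Filter.atTop, 1 ≤ ik k := by
      filter_upwards [ht0.eventually_lt_const one_pos] with k hk
      by_contra h
      push_neg at h
      interval_cases hikk : ik k
      simp [hikk] at hk
    have hτ0 : Filter.Tendsto (fun k => (β : ℝ) ^ (ik k - 1)) Filter.atTop (nhds 0) := by
      refine squeeze_zero (fun k => pow_nonneg hβ0.le _)
        (g := fun k => β ^ ik k / β) (fun k => ?_) ?_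
      · show β ^ (ik k - 1) ≤ β ^ ik k / β
        rcases Nat.eq_zero_or_pos (ik k) with h | h
        · rw [h]
          simp only [Nat.zero_sub, pow_zero]
          rw [le_div_iff₀ hβ0]
          linarith
        · rw [le_div_iff₀ hβ0, ← pow_succ]
          have hnk : ik k - 1 + 1 = ik k := by omega
          rw [hnk]
      · simpa using ht0.div_const β
    obtain ⟨xstar, φ, hφ, hxφ⟩ := hacc
    have hφtop : Filter.Tendsto φ Filter.atTop Filter.atTop := hφ.tendsto_atTop
    have hxstar_s : xstar ∈ s :=
      hs_cl.mem_of_tendsto hxφ (Filter.Eventually.of_forall fun j => hxs (φ j))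
    have hxstar_u : xstar ∈ u := hsu hxstar_s
    have hfd : ∀ z ∈ u, DifferentiableAt ℝ f z := fun z hz =>
      (hf_cd.differentiableOn one_ne_zero).differentiableAt (hu_open.mem_nhds hz)
    have hfc : ContinuousOn (fderiv ℝ f) u :=
      hf_cd.continuousOn_fderiv_of_isOpen hu_open le_rfl
    have hfc_at : ContinuousAt (fderiv ℝ f) xstar :=
      hfc.continuousAt (hu_open.mem_nhds hxstar_u)
    have hgrad_tendsto : Filter.Tendsto (fun j => gradient f (x (φ j)))
        Filter.atTop (nhds (gradient f xstar)) := by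
      have h1 : Filter.Tendsto (fun j => fderiv ℝ f (x (φ j)))
          Filter.atTop (nhds (fderiv ℝ f xstar)) := hfc_at.tendsto.comp hxφ
      exact ((InnerProductSpace.toDual ℝ E).symm.continuous.tendsto _).comp h1
    obtain ⟨A₀, hA₀⟩ : BddAbove (Set.range fun j => ‖gradient f (x (φ j))‖) :=
      (hgrad_tendsto.norm).bddAbove_range
    obtain ⟨A, hA_def⟩ : ∃ a : ℝ, a = max A₀ 0 := ⟨_, rfl⟩
    have hA : ∀ j, ‖gradient f (x (φ j))‖ ≤ A := by
      intro j; rw [hA_def]; exact le_trans (hA₀ ⟨j, rfl⟩) (le_max_left _ _)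
    have hA_nn : 0 ≤ A := by rw [hA_def]; exact le_max_right _ _
    obtain ⟨R, hR⟩ := hg_sc (A + 1)
    obtain ⟨w₀, hw₀⟩ := hs_ne
    obtain ⟨Bv, hBv_def⟩ : ∃ a : ℝ, a = max (max R 1) (A * ‖w₀‖ + g w₀) := ⟨_, rfl⟩
    have hvb : ∀ j, ‖v (φ j)‖ ≤ Bv := by
      intro j
      rcases le_or_gt (‖v (φ j)‖) (max R 1) with h | h
      · rw [hBv_def]; exact le_trans h (le_max_left _ _)
      rw [hBv_def]
      refine le_trans ?_ (le_max_right _ _)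
      have hvk := (hv (φ j)).2 w₀ hw₀
      have h1 : ⟪gradient f (x (φ j)), w₀⟫ ≤ A * ‖w₀‖ :=
        le_trans (real_inner_le_norm _ _)
          (mul_le_mul_of_nonneg_right (hA j) (norm_nonneg _))
      have h2 : -(A * ‖v (φ j)‖) ≤ ⟪gradient f (x (φ j)), v (φ j)⟫ := by
        have habs := abs_real_inner_le_norm (gradient f (x (φ j))) (v (φ j))
        have h3 : ‖gradient f (x (φ j))‖ * ‖v (φ j)‖ ≤ A * ‖v (φ j)‖ :=
          mul_le_mul_of_nonneg_right (hA j) (norm_nonneg _)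
        cases' abs_le.mp habs with hl hr
        linarith
      have hnv : (1 : ℝ) ≤ ‖v (φ j)‖ := le_trans (le_max_right R 1) h.le
      have hg_low : A + 1 ≤ g (v (φ j)) / ‖v (φ j)‖ :=
        hR _ (hv (φ j)).1 (le_trans (le_max_left R 1) h.le)
      have hg_low' : (A + 1) * ‖v (φ j)‖ ≤ g (v (φ j)) := by
        have hpos : (0 : ℝ) < ‖v (φ j)‖ := lt_of_lt_of_le one_pos hnv
        rw [le_div_iff₀ hpos] at hg_low
        exact hg_low
      nlinarith
    obtain ⟨Bx₀, hBx₀⟩ : BddAbove (Set.range fun j => ‖x (φ j)‖) :=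
      (hxφ.norm).bddAbove_range
    obtain ⟨D, hD_def⟩ : ∃ a : ℝ, a = Bv + max Bx₀ 0 + 1 := ⟨_, rfl⟩
    have hBv_nn : (0:ℝ) ≤ Bv := le_trans (norm_nonneg _) (hvb 0)
    have hD_pos : 0 < D := by
      rw [hD_def]
      have h1 : (0:ℝ) ≤ max Bx₀ 0 := le_max_right _ _
      linarith
    have hdb : ∀ j, ‖d (φ j)‖ ≤ D := by
      intro j
      rw [hd, hD_def]
      calc ‖v (φ j) - x (φ j)‖ ≤ ‖v (φ j)‖ + ‖x (φ j)‖ := norm_sub_le _ _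
        _ ≤ Bv + max Bx₀ 0 :=
            add_le_add (hvb j) (le_trans (hBx₀ ⟨j, rfl⟩) (le_max_left _ _))
        _ ≤ Bv + max Bx₀ 0 + 1 := by linarith
    obtain ⟨ε', hε'_def⟩ : ∃ a : ℝ, a = (1 - σ) * ε / (2 * D) := ⟨_, rfl⟩
    have hε'_pos : 0 < ε' := by
      rw [hε'_def]
      exact div_pos (mul_pos (by linarith) hε) (by linarith)
    obtain ⟨δ₁, hδ₁_pos, hδ₁⟩ := Metric.isOpen_iff.mp hu_open xstar hxstar_u
    obtain ⟨δ₂, hδ₂_pos, hδ₂⟩ : ∃ δ > 0, ∀ z, dist z xstar < δ →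
        ‖fderiv ℝ f z - fderiv ℝ f xstar‖ < ε' / 2 := by
      obtain ⟨δ, hδ_pos, hδ⟩ := Metric.continuousAt_iff.mp hfc_at (ε' / 2) (by linarith)
      exact ⟨δ, hδ_pos, fun z hz => by
        have h := hδ hz
        rwa [dist_eq_norm] at h⟩
    obtain ⟨δ, hδ_def⟩ : ∃ a : ℝ, a = min δ₁ δ₂ := ⟨_, rfl⟩
    have hδ_pos : 0 < δ := by rw [hδ_def]; exact lt_min hδ₁_pos hδ₂_pos
    have hδ_le₁ : δ ≤ δ₁ := by rw [hδ_def]; exact min_le_left _ _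
    have hδ_le₂ : δ ≤ δ₂ := by rw [hδ_def]; exact min_le_right _ _
    have e1 : ∀ᶠ j in Filter.atTop, dist (x (φ j)) xstar < δ / 2 :=
      Metric.tendsto_nhds.mp hxφ _ (by linarith)
    have e2 : ∀ᶠ j in Filter.atTop, (β : ℝ) ^ (ik (φ j) - 1) * D < δ / 2 := by
      have h := (hτ0.comp hφtop).mul_const D
      simp only [Function.comp, mul_zero] at h
      exact h.eventually_lt_const (by linarith)
    have e3 : ∀ᶠ j in Filter.atTop, 1 ≤ ik (φ j) := hφtop.eventually hik1
    obtain ⟨j, h1, h2, h3⟩ := (e1.and (e2.and e3)).exists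
    obtain ⟨k, hk_def⟩ : ∃ a : ℕ, a = φ j := ⟨_, rfl⟩
    rw [← hk_def] at h1 h2 h3
    have hdbk : ‖d k‖ ≤ D := by rw [hk_def]; exact hdb j
    obtain ⟨τ, hτ_def⟩ : ∃ a : ℝ, a = β ^ (ik k - 1) := ⟨_, rfl⟩
    rw [← hτ_def] at h2
    have hτ_pos : 0 < τ := by rw [hτ_def]; exact pow_pos hβ0 _
    have hτ_le1 : τ ≤ 1 := by rw [hτ_def]; exact pow_le_one₀ hβ0.le hβ1.le
    obtain ⟨y, hy_def⟩ : ∃ a : E, a = x k + τ • d k := ⟨_, rfl⟩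
    -- failed line search at step ik k - 1
    have hfail : Fs k - σ * τ * FWgap f g s (x k) < f y + g y := by
      have hh := (hik k).2 (ik k - 1) (by omega)
      push_neg at hh
      rw [hy_def, hτ_def]
      exact hh
    have hfail' : f (x k) + g (x k) - σ * τ * FWgap f g s (x k) < f y + g y :=
      lt_of_le_of_lt (by linarith [hFx_le_Fs k]) hfail
    -- g bound by convexity
    have hgy : g y ≤ g (x k) + τ * (g (v k) - g (x k)) := by
      have hyy : y = (1 - τ) • x k + τ • v k := by
        rw [hy_def, hd]; module
      rw [hyy]
      have hco : g ((1 - τ) • x k + τ • v k) ≤ (1 - τ) * g (x k) + τ * g (v k) :=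
        hg_cv.2 (hxs k) (hv k).1 (by linarith) hτ_pos.le (by ring)
      linarith
    -- both x k and y in the ball
    have hxk_ball : x k ∈ Metric.ball xstar δ := by
      rw [Metric.mem_ball]
      linarith [h1]
    have hy_ball : y ∈ Metric.ball xstar δ := by
      rw [Metric.mem_ball, dist_eq_norm]
      have hb : ‖y - xstar‖ ≤ ‖x k - xstar‖ + τ * ‖d k‖ := by
        rw [hy_def]
        calc ‖x k + τ • d k - xstar‖ ≤ ‖x k - xstar‖ + ‖τ • d k‖ := by
              rw [add_sub_right_comm]; exact norm_add_le _ _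
          _ = ‖x k - xstar‖ + τ * ‖d k‖ := by
              rw [norm_smul, Real.norm_of_nonneg hτ_pos.le]
      have hdk : τ * ‖d k‖ ≤ τ * D := mul_le_mul_of_nonneg_left hdbk hτ_pos.le
      have hx_dist : ‖x k - xstar‖ < δ / 2 := by rw [← dist_eq_norm]; exact h1
      have hτD : τ * D < δ / 2 := h2
      linarith
    have hball_u : Metric.ball xstar δ ⊆ u :=
      le_trans (Metric.ball_subset_ball hδ_le₁) hδ₁
    have hfd_bound : ∀ z ∈ Metric.ball xstar δ,
        ‖fderiv ℝ f z - fderiv ℝ f (x k)‖ ≤ ε' := by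
      intro z hz
      have hz2 : ‖fderiv ℝ f z - fderiv ℝ f xstar‖ < ε' / 2 :=
        hδ₂ z (lt_of_lt_of_le (Metric.mem_ball.mp hz) hδ_le₂)
      have hx2 : ‖fderiv ℝ f (x k) - fderiv ℝ f xstar‖ < ε' / 2 := by
        refine hδ₂ _ (lt_of_lt_of_le ?_ hδ_le₂)
        calc dist (x k) xstar < δ / 2 := h1
          _ ≤ δ := by linarith
      calc ‖fderiv ℝ f z - fderiv ℝ f (x k)‖
          = ‖(fderiv ℝ f z - fderiv ℝ f xstar) - (fderiv ℝ f (x k) - fderiv ℝ f xstar)‖ := by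
            congr 1; abel
        _ ≤ ‖fderiv ℝ f z - fderiv ℝ f xstar‖ + ‖fderiv ℝ f (x k) - fderiv ℝ f xstar‖ :=
            norm_sub_le _ _
        _ ≤ ε' := by linarith
    have hmv : ‖(f y - fderiv ℝ f (x k) y) - (f (x k) - fderiv ℝ f (x k) (x k))‖
        ≤ ε' * ‖y - x k‖ := by
      refine Convex.norm_image_sub_le_of_norm_hasFDerivWithin_le
        (f := fun w => f w - fderiv ℝ f (x k) w)
        (f' := fun z => fderiv ℝ f z - fderiv ℝ f (x k))
        (fun z hz => (((hfd z (hball_u hz)).hasFDerivAt.sub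
          ((fderiv ℝ f (x k)).hasFDerivAt)).hasFDerivWithinAt))
        hfd_bound (convex_ball _ _) hxk_ball hy_ball
    have hyx : y - x k = τ • d k := by rw [hy_def]; abel
    have hfy : f y ≤ f (x k) + τ * ⟪gradient f (x k), d k⟫ + ε' * (τ * D) := by
      have h4 : fderiv ℝ f (x k) y - fderiv ℝ f (x k) (x k)
          = τ * fderiv ℝ f (x k) (d k) := by
        rw [← map_sub, hyx, map_smul]; simp
      have h5 : ‖y - x k‖ = τ * ‖d k‖ := by
        rw [hyx, norm_smul, Real.norm_of_nonneg hτ_pos.le]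
      have h7 : ε' * ‖y - x k‖ ≤ ε' * (τ * D) := by
        rw [h5]
        exact mul_le_mul_of_nonneg_left
          (mul_le_mul_of_nonneg_left hdbk hτ_pos.le) hε'_pos.le
      rw [Real.norm_eq_abs] at hmv
      have h6' := (abs_le.mp hmv).2
      have h8' : τ * ⟪gradient f (x k), d k⟫ = τ * fderiv ℝ f (x k) (d k) := by
        rw [hgradapp]
      linarith [h4, h6', h7, h8']
    have hgap_eq : ⟪gradient f (x k), d k⟫ + (g (v k) - g (x k))
        = -FWgap f g s (x k) := by
      rw [hgap k, hd]
      simp only [inner_sub_right]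
      ring
    have hG_ge : ε ≤ FWgap f g s (x k) := hcon k
    have h9 : τ * ⟪gradient f (x k), d k⟫ + τ * (g (v k) - g (x k))
        = -(τ * FWgap f g s (x k)) := by
      rw [← mul_add, hgap_eq]; ring
    have hfinal : (1 - σ) * τ * FWgap f g s (x k) < ε' * (τ * D) := by
      linarith [hfail', hgy, hfy, h9]
    have hεD' : ε' * (τ * D) = τ * ((1 - σ) * ε / 2) := by
      rw [hε'_def]; field_simp
    have h10 : (1 - σ) * τ * ε ≤ (1 - σ) * τ * FWgap f g s (x k) :=
      mul_le_mul_of_nonneg_left hG_ge (mul_nonneg (by linarith) hτ_pos.le)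
    have h11 : 0 < (1 - σ) * τ * ε := mul_pos (mul_pos (by linarith) hτ_pos) hε
    linarith [h10, hfinal, hεD', h11]
  -- conclude
  rw [Metric.tendsto_atTop]
  intro ε hε
  obtain ⟨k₀, hk₀⟩ := hmain ε hε
  refine ⟨k₀, fun k hk => ?_⟩
  have hMle : (Finset.range (k + 1)).inf' Finset.nonempty_range_add_one
      (fun l => FWgap f g s (x l)) ≤ FWgap f g s (x k₀) :=
    Finset.inf'_le _ (Finset.mem_range.mpr (by omega))
  have hMnn : 0 ≤ (Finset.range (k + 1)).inf' Finset.nonempty_range_add_one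
      (fun l => FWgap f g s (x l)) := by
    rw [Finset.le_inf'_iff]
    exact fun l _ => hGnn l
  rw [Real.dist_eq, abs_of_nonneg (by linarith [hMnn])]
  simp only [sub_zero]
  linarith
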